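/- Let θ : S → S and θ′ : S′ → S′ be maps of finite sets and π : S → S′ a surjection with π ∘ θ = θ′ ∘ π. Assume that π is injective except for exactly one fiber of cardinality two, i.e. there exist distinct a, b ∈ S with π(a) = π(b), and π is injective on S \ {b}. Then the stabilization indices satisfy d(θ) ≤ d(θ′) + 1. -/
import Mathlib


/-- The stabilization index of a self-map of a finite set: the least `m` with
`Im θ^m = Im θ^{m+1}`. -/
noncomputable def stabIdx {S : Type*} (θ : S → S) : ℕ :=
  sInf {m | Set.range θ^[m] = Set.range θ^[m + 1]}

lemma range_iter_succ' {S : Type*} (θ : S → S) (m : ℕ) :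
    Set.range θ^[m + 1] = θ '' Set.range θ^[m] := by
  rw [Function.iterate_succ', Set.range_comp]

lemma range_iter_succ_subset {S : Type*} (θ : S → S) (m : ℕ) :
    Set.range θ^[m + 1] ⊆ Set.range θ^[m] := by
  rw [Function.iterate_succ]
  exact Set.range_comp_subset_range _ _

lemma stab_set_nonempty {S : Type*} [Fintype S] (θ : S → S) :
    {m | Set.range θ^[m] = Set.range θ^[m + 1]}.Nonempty := by
  set g : ℕ → ℕ := fun m => (Set.range θ^[m]).ncard with hg
  have hne : (Set.range g).Nonempty := ⟨g 0, 0, rfl⟩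
  obtain ⟨m, hm⟩ := Nat.sInf_mem hne
  refine ⟨m, ?_⟩
  have hsub := range_iter_succ_subset θ m
  have h1 : g (m + 1) ≤ g m := Set.ncard_le_ncard hsub (Set.toFinite _)
  have h2 : sInf (Set.range g) ≤ g (m + 1) := Nat.sInf_le ⟨m + 1, rfl⟩
  rw [← hm] at h2
  show Set.range θ^[m] = Set.range θ^[m + 1]
  exact (Set.eq_of_subset_of_ncard_le hsub (le_antisymm h1 h2).ge
    (Set.toFinite _)).symm

lemma key_drop {S S' : Type*} (π : S → S') (a b : S) (hab : a ≠ b)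
    (hfib : π a = π b) (hinj : Set.InjOn π {b}ᶜ) {T' : Set S} {x : S}
    (him : π x ∈ π '' T') (hx' : x ∉ T') :
    (x = a ∧ b ∈ T') ∨ (x = b ∧ a ∈ T') := by
  obtain ⟨y, hyT', hy⟩ := him
  have hne : x ≠ y := fun h => hx' (h ▸ hyT')
  have hbc : ∀ z : S, z ≠ b → z ∈ ({b}ᶜ : Set S) := fun z hz => by
    simpa using hz
  by_cases hxb : x = b
  · have hyb : y ≠ b := fun h => hne (hxb.trans h.symm)
    have hya : y = a := hinj (hbc y hyb) (hbc a hab) (by rw [hy, hxb, ← hfib])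
    exact Or.inr ⟨hxb, hya ▸ hyT'⟩
  · have hyb : y = b := by
      by_contra hyb
      exact hne (hinj (hbc x hxb) (hbc y hyb) hy.symm)
    have hxa : x = a := hinj (hbc x hxb) (hbc a hab) (hy.symm.trans (hyb ▸ hfib.symm))
    exact Or.inl ⟨hxa, hyb ▸ hyT'⟩

/-- if `π` is a surjection which is injective except for exactly one
fiber of cardinality two, then `d(θ) ≤ d(θ′) + 1`. -/
theorem stabIdx_le_succ_of_almost_injective {S S' : Type*} [Fintype S] [Fintype S']
    (θ : S → S) (θ' : S' → S') (π : S → S')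
    (hπ : Function.Surjective π) (hcomm : π ∘ θ = θ' ∘ π)
    (a b : S) (hab : a ≠ b) (hfib : π a = π b)
    (hinj : Set.InjOn π {b}ᶜ) :
    stabIdx θ ≤ stabIdx θ' + 1 := by
  have hsemi : Function.Semiconj π θ θ' := fun x => congrFun hcomm x
  have hpi : ∀ k : ℕ, π '' Set.range θ^[k] = Set.range θ'^[k] := by
    intro k
    have h : π ∘ θ^[k] = θ'^[k] ∘ π := (hsemi.iterate_right k).comp_eq
    calc π '' Set.range θ^[k] = Set.range (π ∘ θ^[k]) := (Set.range_comp _ _).symm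
      _ = Set.range (θ'^[k] ∘ π) := by rw [h]
      _ = Set.range θ'^[k] := by rw [Set.range_comp, hπ.range_eq, Set.image_univ]
  set m := stabIdx θ' with hmdef
  have hm : Set.range θ'^[m] = Set.range θ'^[m + 1] :=
    Nat.sInf_mem (stab_set_nonempty θ')
  have hm2 : Set.range θ'^[m + 1] = Set.range θ'^[m + 2] := by
    rw [range_iter_succ' θ' m, show m + 2 = (m + 1) + 1 from rfl,
      range_iter_succ' θ' (m + 1), hm]
  -- key: a drop from level k to k+1 (with equal π-images) forces the dropped
  -- element to be a or b, with the other one present at level k+1.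
  have drop : ∀ (k : ℕ) (x : S), Set.range θ'^[k] = Set.range θ'^[k + 1] →
      x ∈ Set.range θ^[k] → x ∉ Set.range θ^[k + 1] →
      (x = a ∧ b ∈ Set.range θ^[k + 1]) ∨ (x = b ∧ a ∈ Set.range θ^[k + 1]) := by
    intro k x h' hx hx'
    refine key_drop π a b hab hfib hinj ?_ hx'
    have : π x ∈ Set.range θ'^[k + 1] := by
      rw [← h', ← hpi k]
      exact ⟨x, hx, rfl⟩
    rwa [← hpi (k + 1)] at this
  -- show the range of θ stabilizes from m+1 to m+2
  have heq : Set.range θ^[m + 1] = Set.range θ^[m + 2] := by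
    by_contra hne
    obtain ⟨x, hx, hx'⟩ := Set.exists_of_ssubset
      ((range_iter_succ_subset θ (m + 1)).ssubset_of_ne (fun h => hne h.symm))
    obtain hcase | hcase := drop (m + 1) x hm2 hx hx'
    · -- x = a, b ∈ range θ^[m+2]
      have ha1 : a ∈ Set.range θ^[m + 1] := hcase.1 ▸ hx
      have hb1 : b ∈ Set.range θ^[m + 1] := range_iter_succ_subset θ (m + 1) hcase.2
      have hstab : Set.range θ^[m] = Set.range θ^[m + 1] := by
        by_contra hne'
        obtain ⟨z, hz, hz'⟩ := Set.exists_of_ssubset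
          ((range_iter_succ_subset θ m).ssubset_of_ne (fun h => hne' h.symm))
        obtain h2 | h2 := drop m z hm hz hz'
        · exact hz' (h2.1 ▸ ha1)
        · exact hz' (h2.1 ▸ hb1)
      have : Set.range θ^[m + 1] = Set.range θ^[m + 2] := by
        rw [range_iter_succ' θ m, show m + 2 = (m + 1) + 1 from rfl,
          range_iter_succ' θ (m + 1), hstab]
      exact hne this
    · have hb1 : b ∈ Set.range θ^[m + 1] := hcase.1 ▸ hx
      have ha1 : a ∈ Set.range θ^[m + 1] := range_iter_succ_subset θ (m + 1) hcase.2
      have hstab : Set.range θ^[m] = Set.range θ^[m + 1] := by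
        by_contra hne'
        obtain ⟨z, hz, hz'⟩ := Set.exists_of_ssubset
          ((range_iter_succ_subset θ m).ssubset_of_ne (fun h => hne' h.symm))
        obtain h2 | h2 := drop m z hm hz hz'
        · exact hz' (h2.1 ▸ ha1)
        · exact hz' (h2.1 ▸ hb1)
      have : Set.range θ^[m + 1] = Set.range θ^[m + 2] := by
        rw [range_iter_succ' θ m, show m + 2 = (m + 1) + 1 from rfl,
          range_iter_succ' θ (m + 1), hstab]
      exact hne this
  exact Nat.sInf_le heq
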